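/- Let (A, μ, α) be a Hom-associative algebra over a field k of characteristic 0, i.e. A is a k-vector space with a bilinear multiplication a·b = μ(a,b) and a linear map α : A → A satisfying α(a·b) = α(a)·α(b) and α(a)·(b·c) = (a·b)·α(c) for all a,b,c ∈ A. Then (A, [·,·], α) with the commutator bracket [a,b] := a·b − b·a is a Hom-Lie algebra. -/

import Mathlib

/-- A two-argument map that is linear in each argument separately. -/
def IsBilin (k : Type*) [Field k] {M N P : Type*}
    [AddCommGroup M] [Module k M] [AddCommGroup N] [Module k N]
    [AddCommGroup P] [Module k P] (f : M → N → P) : Prop :=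
  (∀ x, IsLinearMap k (f x)) ∧ (∀ y, IsLinearMap k (fun x => f x y))

/-- A Hom-Lie algebra structure: a skew-symmetric bilinear bracket `B` and a linear
twist map `α` satisfying multiplicativity and the Hom-Jacobi identity. -/
def IsHomLie (k : Type*) [Field k] {g : Type*} [AddCommGroup g] [Module k g]
    (B : g → g → g) (α : g → g) : Prop :=
  IsLinearMap k α ∧ IsBilin k B ∧
  (∀ x y, B x y = - B y x) ∧
  (∀ x y, α (B x y) = B (α x) (α y)) ∧
  (∀ x y z, B (α x) (B y z) + B (α y) (B z x) + B (α z) (B x y) = 0)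

/-- A representation `(V, ρ, β)` of the Hom-Lie algebra `(g, B, α)`. -/
def IsHomLieRep (k : Type*) [Field k] {g V : Type*} [AddCommGroup g] [Module k g]
    [AddCommGroup V] [Module k V]
    (B : g → g → g) (α : g → g) (ρ : g → V → V) (β : V → V) : Prop :=
  IsLinearMap k β ∧ IsBilin k ρ ∧
  (∀ x v, β (ρ x v) = ρ (α x) (β v)) ∧
  (∀ x y v, ρ (α x) (ρ y v) - ρ (α y) (ρ x v) = ρ (B x y) (β v))

/-- An embedding tensor `T : V → g` on the Hom-Lie algebra `(g, B, α)` with respect to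
the representation `(V, ρ, β)`. -/
def IsEmbTensor (k : Type*) [Field k] {g V : Type*} [AddCommGroup g] [Module k g]
    [AddCommGroup V] [Module k V]
    (B : g → g → g) (α : g → g) (ρ : g → V → V) (β : V → V) (T : V → g) : Prop :=
  IsLinearMap k T ∧ (∀ v, α (T v) = T (β v)) ∧
  (∀ u v, B (T u) (T v) = T (ρ (T u) v))

/-- A Hom-Leibniz algebra structure: a bilinear bracket `L` and a linear twist `α`
satisfying multiplicativity and the Hom-Leibniz identity. -/
def IsHomLeibniz (k : Type*) [Field k] {H : Type*} [AddCommGroup H] [Module k H]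
    (L : H → H → H) (α : H → H) : Prop :=
  IsLinearMap k α ∧ IsBilin k L ∧
  (∀ x y, α (L x y) = L (α x) (α y)) ∧
  (∀ x y z, L (α x) (L y z) = L (L x y) (α z) + L (α y) (L x z))

/-- A representation of the Hom-Leibniz algebra `(H, L, α)` on `(W, γ)` via left and
right actions `ρL`, `ρR`. -/
def IsHomLeibnizRep (k : Type*) [Field k] {H W : Type*} [AddCommGroup H] [Module k H]
    [AddCommGroup W] [Module k W]
    (L : H → H → H) (α : H → H)
    (ρL : H → W → W) (ρR : W → H → W) (γ : W → W) : Prop :=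
  IsLinearMap k γ ∧ IsBilin k ρL ∧ IsBilin k ρR ∧
  (∀ x w, γ (ρL x w) = ρL (α x) (γ w)) ∧
  (∀ x w, γ (ρR w x) = ρR (γ w) (α x)) ∧
  (∀ x y w, ρL (α x) (ρL y w) = ρL (L x y) (γ w) + ρL (α y) (ρL x w)) ∧
  (∀ x y w, ρL (α x) (ρR w y) = ρR (ρL x w) (α y) + ρR (γ w) (L x y)) ∧
  (∀ x y w, ρR (γ w) (L x y) = ρR (ρR w x) (α y) + ρL (α x) (ρR w y))

/-- The commutator bracket of a Hom-associative algebra `(A, μ, α)`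
gives a Hom-Lie algebra `(A, [·,·], α)`. -/
theorem stmt1 {k A : Type*} [Field k] [CharZero k] [AddCommGroup A] [Module k A]
    (μ : A → A → A) (α : A → A)
    (hμ : IsBilin k μ) (hα : IsLinearMap k α)
    (hmul : ∀ a b, α (μ a b) = μ (α a) (α b))
    (hassoc : ∀ a b c, μ (α a) (μ b c) = μ (μ a b) (α c)) :
    IsHomLie k (fun a b => μ a b - μ b a) α := by
  obtain ⟨hl, hr⟩ := hμ
  have hsl : ∀ x a b, μ x (a - b) = μ x a - μ x b := fun x a b => (hl x).map_sub a b
  have hsr : ∀ x a b, μ (a - b) x = μ a x - μ b x := fun x a b => (hr x).map_sub a b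
  refine ⟨hα, ⟨⟨fun x => ⟨fun a b => ?_, fun c a => ?_⟩, fun y => ⟨fun a b => ?_, fun c a => ?_⟩⟩,
    fun x y => by exact (neg_sub _ _).symm, fun x y => ?_, fun x y z => ?_⟩⟩
  · simp [(hl x).map_add, (hr _).map_add]; abel
  · simp [(hl x).map_smul, (hr _).map_smul, smul_sub]
  · simp [(hl _).map_add, (hr y).map_add]; abel
  · simp [(hl _).map_smul, (hr y).map_smul, smul_sub]
  · simp only [hα.map_sub, hmul]
  · simp only [hsl, hsr, hassoc]
    abel
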